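/- Let A be a group and C a subgroup of A. Let G = A *_C A be the amalgamated free product of two copies of A along the inclusion of C into each copy, with canonical injective homomorphisms φ_1, φ_2 : A → G satisfying φ_1|_C = φ_2|_C. Let σ : G → G be the automorphism determined by the universal property from σ ∘ φ_1 = φ_2 and σ ∘ φ_2 = φ_1 (the involution exchanging the two copies of A and fixing C). Then the fixed subgroup of σ is exactly the canonical image of C: for g ∈ G, σ(g) = g if and only if g ∈ φ_1(C). -/

import Mathlib

universe u

open Monoid Monoid.PushoutI Monoid.PushoutI.NormalWord Subgroup

section Key

variable {A : Type u} [Group A] (C : Subgroup A)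

/-- the constant family of inclusions -/
abbrev incl : ∀ _ : Bool, C →* A := fun _ => C.subtype

theorem key_fixed (τ : PushoutI (incl C) →* PushoutI (incl C))
    (hτ : ∀ (i : Bool) (a : A), τ (of i a) = of (!i) a)
    (hτb : ∀ c : C, τ (base (incl C) c) = base (incl C) c)
    (p : PushoutI (incl C)) (hp : τ p = p) :
    p ∈ (base (incl C)).range := by
  classical
  -- a symmetric transversal
  obtain ⟨s, hs, h1s⟩ := (C.subtype.range).exists_isComplement_right 1
  let d : Transversal (incl C) :=
    { injective := fun _ => C.subtype_injective
      set := fun _ => s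
      one_mem := fun _ => h1s
      compl := fun _ => hs }
  -- the normal word representing p
  obtain ⟨w, hw⟩ : ∃ w : NormalWord d, w.prod = p := ⟨NormalWord.equiv p, (NormalWord.equiv).left_inv p⟩
  -- compute products of lists of letters
  have hlist : ∀ L : List (Σ _ : Bool, A),
      τ ((L.map fun l => of (φ := incl C) l.1 l.2).prod)
        = ((L.map fun l => of (φ := incl C) (!l.1) l.2).prod) := by
    intro L
    induction L with
    | nil => simp
    | cons a t ih => simp [ih, hτ]
  have hofprod : ∀ v : CoprodI.Word (fun _ : Bool => A),
      ofCoprodI (φ := incl C) v.prod = (v.toList.map fun l => of (φ := incl C) l.1 l.2).prod := by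
    intro v
    rw [CoprodI.Word.prod, map_list_prod, List.map_map]
    simp [Function.comp_def]
  -- the flipped word
  have hflipchain : (w.toList.map fun l : (Σ _ : Bool, A) => (⟨!l.1, l.2⟩ : Σ _ : Bool, A)).IsChain
      fun l l' => l.1 ≠ l'.1 := by
    rw [List.isChain_map]
    exact w.chain_ne.imp fun a b h hc => h (by simpa using hc)
  let W' : CoprodI.Word (fun _ : Bool => A) :=
    { toList := w.toList.map fun l => ⟨!l.1, l.2⟩
      ne_one := by
        intro l hl
        obtain ⟨a, ha, rfl⟩ := List.mem_map.1 hl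
        exact w.ne_one a ha
      chain_ne := hflipchain }
  let w' : NormalWord d :=
    { toWord := W'
      head := w.head
      normalized := by
        intro i g hg
        obtain ⟨⟨j, a⟩, ha, heq⟩ := List.mem_map.1 hg
        have hag : a = g := ((by simpa using heq : _ ∧ a = g)).2
        show g ∈ s
        exact hag ▸ w.normalized j a ha }
  have hw'prod : w'.prod = τ p := by
    rw [← hw]
    show base (incl C) w.head * ofCoprodI W'.prod
      = τ (base (incl C) w.head * ofCoprodI w.toWord.prod)
    rw [map_mul, hτb, hofprod, hofprod, hlist]
    congr 1
    simp only [W', List.map_map]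
    rfl
  -- flipping fixes the word, hence the word is empty
  have hww' : w' = w := NormalWord.prod_injective (by rw [hw'prod, hp, hw])
  have hnil : w.toList = [] := by
    rcases hlw : w.toList with _ | ⟨a, t⟩
    · rfl
    · exfalso
      have := congrArg (fun v : NormalWord d => v.toList) hww'
      simp only [w', W', hlw, List.map_cons] at this
      simp only [List.cons.injEq] at this
      have := congrArg Sigma.fst this.1
      simp at this
  refine ⟨w.head, ?_⟩
  rw [← hw]
  show base (incl C) w.head = base (incl C) w.head * ofCoprodI w.toWord.prod
  rw [CoprodI.Word.prod, hnil]
  simp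

end Key

/-- `IsAmalgamatedProduct f g φ₁ φ₂` says that `(G, φ₁, φ₂)` is a pushout of `f : C →* A`
and `g : C →* B` in the category of groups, i.e. that `G` is the amalgamated free product
`A *_C B` with its canonical homomorphisms `φ₁ : A → G`, `φ₂ : B → G`. -/
structure IsAmalgamatedProduct {C A B G : Type*} [Group C] [Group A] [Group B] [Group G]
    (f : C →* A) (g : C →* B) (φ₁ : A →* G) (φ₂ : B →* G) : Prop where
  comm : φ₁.comp f = φ₂.comp g
  lift_unique : ∀ {H : Type u} [Group H] (ψ₁ : A →* H) (ψ₂ : B →* H),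
    ψ₁.comp f = ψ₂.comp g → ∃! h : G →* H, h.comp φ₁ = ψ₁ ∧ h.comp φ₂ = ψ₂

/-- `IsFreeProduct ι₁ ι₂` says that `(P, ι₁, ι₂)` is a coproduct of `A` and `K` in the
category of groups, i.e. that `P` is the free product `A * K` with its canonical
homomorphisms. -/
structure IsFreeProduct {A K P : Type*} [Group A] [Group K] [Group P]
    (ι₁ : A →* P) (ι₂ : K →* P) : Prop where
  lift_unique : ∀ {H : Type u} [Group H] (ψ₁ : A →* H) (ψ₂ : K →* H),
    ∃! h : P →* H, h.comp ι₁ = ψ₁ ∧ h.comp ι₂ = ψ₂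

/-- In the double `G = A *_C A` of a group `A` along a subgroup `C` (the amalgamated free
product of two copies of `A` along the inclusions of `C`, with its canonical injective
homomorphisms `φ₁, φ₂`), the fixed subgroup of the involution `σ` exchanging the two copies
of `A` (determined by `σ ∘ φ₁ = φ₂` and `σ ∘ φ₂ = φ₁`) is exactly the canonical image of
`C`. -/
theorem fixed_subgroup_of_exchange_involution_eq_amalgamated_subgroup
    {A G : Type u} [Group A] [Group G] (C : Subgroup A)
    (φ₁ φ₂ : A →* G)
    (hφ₁ : Function.Injective φ₁) (hφ₂ : Function.Injective φ₂)
    (hpush : IsAmalgamatedProduct.{u} C.subtype C.subtype φ₁ φ₂)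
    (σ : G →* G) (hσ₁ : σ.comp φ₁ = φ₂) (hσ₂ : σ.comp φ₂ = φ₁) :
    ∀ x : G, σ x = x ↔ x ∈ φ₁ '' (C : Set A) := by
  classical
  -- `φ₁` and `φ₂` agree on `C`
  have hC : ∀ c ∈ C, φ₁ c = φ₂ c := fun c hc =>
    DFunLike.congr_fun hpush.comm (⟨c, hc⟩ : C)
  -- the swap automorphism on the concrete pushout
  set P := PushoutI (incl C) with hP
  have hcomm : ∀ i : Bool, (PushoutI.of (φ := incl C) (!i)).comp ((incl C) i)
      = base (incl C) := fun i => of_comp_eq_base (!i)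
  let τ : P →* P := PushoutI.lift (fun i => PushoutI.of (φ := incl C) (!i)) (base (incl C)) hcomm
  have hτ : ∀ (i : Bool) (a : A), τ (PushoutI.of i a) = PushoutI.of (!i) a := fun i a =>
    PushoutI.lift_of _ _ _ _
  have hτb : ∀ c : C, τ (base (incl C) c) = base (incl C) c := fun c =>
    PushoutI.lift_base _ _ _ _
  -- the comparison map `θ : G →* P`
  have hcomm2 : (PushoutI.of (φ := incl C) true).comp C.subtype
      = (PushoutI.of (φ := incl C) false).comp C.subtype := by
    rw [of_comp_eq_base (φ := incl C) true, of_comp_eq_base (φ := incl C) false]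
  obtain ⟨θ, ⟨hθ₁, hθ₂⟩, hθuniq⟩ := hpush.lift_unique
    (PushoutI.of (φ := incl C) true) (PushoutI.of (φ := incl C) false) hcomm2
  -- the retraction `ρ : P →* G`
  have hρcomm : ∀ i : Bool, ((fun i : Bool => bif i then φ₁ else φ₂) i).comp ((incl C) i)
      = φ₁.comp C.subtype := fun i => by
    cases i with
    | false => exact hpush.comm.symm
    | true => rfl
  let ρ : P →* G := PushoutI.lift (fun i => bif i then φ₁ else φ₂) (φ₁.comp C.subtype) hρcomm
  have hρθ : ρ.comp θ = MonoidHom.id G := by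
    obtain ⟨h, -, huniq⟩ := hpush.lift_unique φ₁ φ₂ hpush.comm
    have h1 : ρ.comp θ = h := huniq _ (by
      constructor
      · rw [MonoidHom.comp_assoc, hθ₁]; ext a
        exact PushoutI.lift_of (fun i : Bool => bif i then φ₁ else φ₂)
          (φ₁.comp C.subtype) hρcomm a
      · rw [MonoidHom.comp_assoc, hθ₂]; ext a
        exact PushoutI.lift_of (fun i : Bool => bif i then φ₁ else φ₂)
          (φ₁.comp C.subtype) hρcomm a)
    have h2 : MonoidHom.id G = h := huniq _ (by simp)
    rw [h1, ← h2]
  -- `θ` intertwines `σ` and `τ`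
  have hθσ : θ.comp σ = τ.comp θ := by
    have hcomm3 : (PushoutI.of (φ := incl C) false).comp C.subtype
        = (PushoutI.of (φ := incl C) true).comp C.subtype := hcomm2.symm
    obtain ⟨h, -, huniq⟩ := hpush.lift_unique
      (PushoutI.of (φ := incl C) false) (PushoutI.of (φ := incl C) true) hcomm3
    have h1 : θ.comp σ = h := huniq _ (by
      constructor
      · rw [MonoidHom.comp_assoc, hσ₁, hθ₂]
      · rw [MonoidHom.comp_assoc, hσ₂, hθ₁])
    have h2 : τ.comp θ = h := huniq _ (by
      constructor
      · rw [MonoidHom.comp_assoc, hθ₁]; ext a; simp [hτ]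
      · rw [MonoidHom.comp_assoc, hθ₂]; ext a; simp [hτ])
    rw [h1, ← h2]
  intro x
  constructor
  · intro hx
    have hfix : τ (θ x) = θ x := by
      have := DFunLike.congr_fun hθσ x
      simp only [MonoidHom.comp_apply, hx] at this
      exact this.symm
    obtain ⟨c, hc⟩ := key_fixed C τ hτ hτb (θ x) hfix
    -- `θ x = base c = θ (φ₁ c)`, apply the retraction
    have hbase : θ (φ₁ (c : A)) = base (incl C) c := by
      have := DFunLike.congr_fun hθ₁ (c : A)
      simp only [MonoidHom.comp_apply] at this
      rw [this, ← of_apply_eq_base (incl C) true c]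
      rfl
    have hx' : θ x = θ (φ₁ (c : A)) := by rw [hbase, hc]
    have : x = φ₁ (c : A) := by
      have h3 := congrArg ρ hx'
      have e1 : ρ (θ x) = x := DFunLike.congr_fun hρθ x
      have e2 : ρ (θ (φ₁ (c : A))) = φ₁ (c : A) := DFunLike.congr_fun hρθ (φ₁ (c : A))
      rw [e1, e2] at h3
      exact h3
    exact ⟨(c : A), c.2, this.symm⟩
  · rintro ⟨a, ha, rfl⟩
    have := DFunLike.congr_fun hσ₁ a
    simp only [MonoidHom.comp_apply] at this
    rw [this, ← hC a ha]
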